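/- Let n ≥ 1, p > 1 and 1 ≤ k ≤ n. For every Schwartz function u : ℝⁿ → ℂ, Re ∫_{ℝⁿ} |u(x)|^{p-1} u(x) ∂ₖū(x) dx = 0, where ∂ₖ denotes the partial derivative in the k-th coordinate. -/

import Mathlib

open MeasureTheory

/-- For every Schwartz function `u : ℝⁿ → ℂ` and `p > 1`,
`Re ∫ |u|^{p-1} u ∂ₖū dx = 0`, the key cancellation for the power nonlinearity. -/
theorem nonlinearity_momentum_cancellation {n : ℕ} (hn : 1 ≤ n) (p : ℝ) (hp : 1 < p) (k : Fin n)
    (u : SchwartzMap (EuclideanSpace ℝ (Fin n)) ℂ) :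
    (∫ x, ((‖u x‖ ^ (p - 1) : ℝ) : ℂ) * u x *
      fderiv ℝ (fun y => (starRingEnd ℂ) (u y)) x (EuclideanSpace.single k 1)).re = 0 := by
  set v : EuclideanSpace ℝ (Fin n) := EuclideanSpace.single k 1 with hv
  -- the derivative of `conj ∘ u`
  have hconj : ∀ x, HasFDerivAt (fun y => (starRingEnd ℂ) (u y))
      ((Complex.conjCLE.toContinuousLinearMap).comp (fderiv ℝ u x)) x := by
    intro x
    exact (Complex.conjCLE.toContinuousLinearMap.hasFDerivAt).comp x
      u.differentiableAt.hasFDerivAt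
  set F : EuclideanSpace ℝ (Fin n) → ℂ := fun x =>
    ((‖u x‖ ^ (p - 1) : ℝ) : ℂ) * u x *
      fderiv ℝ (fun y => (starRingEnd ℂ) (u y)) x v with hF
  have hFeq : ∀ x, F x = ((‖u x‖ ^ (p - 1) : ℝ) : ℂ) * u x *
      (starRingEnd ℂ) (fderiv ℝ u x v) := by
    intro x
    simp only [hF]
    rw [(hconj x).fderiv]
    simp
  -- global bound on `u`
  obtain ⟨M, hM0, hM⟩ := u.decay 0 0
  have hM' : ∀ x, ‖u x‖ ≤ M := by
    intro x
    have := hM x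
    simpa [norm_iteratedFDeriv_zero] using this
  have habs : ∀ x, ‖u x‖ = ‖u x‖ := fun x => rfl
  -- the Schwartz partial derivative of u
  set du : SchwartzMap (EuclideanSpace ℝ (Fin n)) ℂ := LineDeriv.lineDerivOp v u with hdu
  have hdueq : ∀ x, du x = fderiv ℝ u x v := fun x => SchwartzMap.lineDerivOp_apply_eq_fderiv v u x
  -- integrability of F
  have hFcont : Continuous F := by
    have h1 : Continuous fun x => (‖u x‖ ^ (p - 1) : ℝ) := by
      exact u.continuous.norm.rpow_const (fun x => Or.inr (by linarith))
    have h2 : Continuous fun x => (starRingEnd ℂ) (fderiv ℝ u x v) := by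
      have := Complex.continuous_conj.comp (by simpa [hdueq] using du.continuous)
      simpa [Function.comp_def, hdueq] using this
    have : Continuous fun x => ((‖u x‖ ^ (p - 1) : ℝ) : ℂ) * u x *
        (starRingEnd ℂ) (fderiv ℝ u x v) :=
      ((Complex.continuous_ofReal.comp h1).mul u.continuous).mul h2
    simpa [← hFeq] using this
  have hFbound : ∀ x, ‖F x‖ ≤ M ^ (p - 1) * M * ‖du x‖ := by
    intro x
    rw [hFeq x, hdueq]
    have h1 : ‖u x‖ ^ (p - 1) ≤ M ^ (p - 1) :=
      Real.rpow_le_rpow (by positivity) (by rw [habs]; exact hM' x) (by linarith)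
    have h2 : ‖((‖u x‖ ^ (p - 1) : ℝ) : ℂ)‖ = ‖u x‖ ^ (p - 1) := by
      rw [Complex.norm_real, Real.norm_eq_abs, abs_of_nonneg (by positivity)]
    calc ‖((‖u x‖ ^ (p - 1) : ℝ) : ℂ) * u x * (starRingEnd ℂ) (fderiv ℝ u x v)‖
        = ‖u x‖ ^ (p - 1) * ‖u x‖ * ‖fderiv ℝ u x v‖ := by
          rw [norm_mul, norm_mul, h2, RCLike.norm_conj]
      _ ≤ M ^ (p - 1) * M * ‖fderiv ℝ u x v‖ := by
          apply mul_le_mul_of_nonneg_right _ (norm_nonneg _)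
          exact mul_le_mul h1 (hM' x) (norm_nonneg _) (by positivity)
  have hFint : Integrable F := by
    apply Integrable.mono' ((du.integrable.norm).const_mul (M ^ (p - 1) * M))
      hFcont.aestronglyMeasurable
    filter_upwards with x using hFbound x
  -- reduce to ∫ Re F = 0
  have hre2 : ∫ x, (F x).re = (∫ x, F x).re := by
    simpa using integral_re hFint
  rw [← hre2]
  -- the potential G
  set G : EuclideanSpace ℝ (Fin n) → ℝ := fun x => Complex.normSq (u x) ^ ((p + 1) / 2) with hG
  have hkey : ∀ x, Complex.normSq (u x) ^ ((p + 1) / 2 - 1) = ‖u x‖ ^ (p - 1) := by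
    intro x
    rw [← Complex.sq_norm, ← Real.rpow_natCast (‖u x‖) 2,
      ← Real.rpow_mul (norm_nonneg _)]
    congr 1
    push_cast
    ring
  have hGd : ∀ x, HasLineDerivAt ℝ G ((p + 1) * (F x).re) x v := by
    intro x
    set w := fderiv ℝ u x with hw
    have hu : HasFDerivAt u w x := u.differentiableAt.hasFDerivAt
    have hre : HasFDerivAt (fun y => (u y).re) (Complex.reCLM.comp w) x :=
      (Complex.reCLM.hasFDerivAt).comp x hu
    have him : HasFDerivAt (fun y => (u y).im) (Complex.imCLM.comp w) x :=
      (Complex.imCLM.hasFDerivAt).comp x hu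
    have hsq : HasFDerivAt (fun y => Complex.normSq (u y))
        (((u x).re • (Complex.reCLM.comp w) + (u x).re • (Complex.reCLM.comp w)) +
         ((u x).im • (Complex.imCLM.comp w) + (u x).im • (Complex.imCLM.comp w))) x := by
      have := (hre.mul hre).add (him.mul him)
      simpa [Complex.normSq_apply, Pi.mul_def, Pi.add_def] using this
    have hrp : HasDerivAt (fun t : ℝ => t ^ ((p + 1) / 2))
        (((p + 1) / 2) * Complex.normSq (u x) ^ ((p + 1) / 2 - 1)) (Complex.normSq (u x)) :=
      Real.hasDerivAt_rpow_const (Or.inr (by linarith))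
    have hGF : HasFDerivAt G ((((p + 1) / 2) * Complex.normSq (u x) ^ ((p + 1) / 2 - 1)) •
        (((u x).re • (Complex.reCLM.comp w) + (u x).re • (Complex.reCLM.comp w)) +
         ((u x).im • (Complex.imCLM.comp w) + (u x).im • (Complex.imCLM.comp w)))) x :=
      by have := hrp.comp_hasFDerivAt x hsq; exact this
    have hl := hGF.hasLineDerivAt v
    convert hl using 1
    · rfl
    · rfl
    rw [hFeq x, hkey x, ← hw]
    simp only [ContinuousLinearMap.smul_apply, ContinuousLinearMap.add_apply,
      ContinuousLinearMap.coe_comp', Function.comp_apply, Complex.reCLM_apply,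
      Complex.imCLM_apply, smul_eq_mul, Complex.mul_re, Complex.ofReal_re, Complex.ofReal_im,
      Complex.conj_re, Complex.conj_im, Complex.mul_im]
    ring
  -- integrability of G
  have hGabs : ∀ x, G x = ‖u x‖ ^ (p + 1) := by
    intro x
    simp only [hG]
    rw [← Complex.sq_norm, ← Real.rpow_natCast (‖u x‖) 2,
      ← Real.rpow_mul (norm_nonneg _)]
    congr 1
    push_cast
    ring
  have hGcont : Continuous G :=
    (Complex.continuous_normSq.comp u.continuous).rpow_const (fun x => Or.inr (by positivity))
  have hGbound : ∀ x, ‖G x‖ ≤ M ^ p * ‖u x‖ := by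
    intro x
    rw [Real.norm_of_nonneg (by rw [hGabs x]; positivity), hGabs x]
    rcases eq_or_lt_of_le (norm_nonneg (u x)) with h0 | h0
    · rw [← h0, Real.zero_rpow (by linarith)]
      positivity
    · rw [show p + 1 = p + (1:ℝ) from rfl, Real.rpow_add h0, Real.rpow_one, habs x]
      apply mul_le_mul _ le_rfl (norm_nonneg _) (by positivity)
      exact Real.rpow_le_rpow (norm_nonneg _) (hM' x) (by linarith)
  have hGint : Integrable G := by
    apply Integrable.mono' ((u.integrable.norm).const_mul (M ^ p)) hGcont.aestronglyMeasurable
    filter_upwards with x using hGbound x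
  -- integration by parts against the constant function 1
  have hg : ∀ x : EuclideanSpace ℝ (Fin n), HasLineDerivAt ℝ (fun _ => (1:ℝ)) 0 x v := by
    intro x
    simpa using (hasFDerivAt_const (1:ℝ) x).hasLineDerivAt v
  have hf'g : Integrable (fun x => (ContinuousLinearMap.mul ℝ ℝ) ((p + 1) * (F x).re)
      ((fun _ => (1:ℝ)) x)) (volume) := by
    simpa using (hFint.re.const_mul (p + 1))
  have hfg' : Integrable (fun x => (ContinuousLinearMap.mul ℝ ℝ) (G x)
      ((fun _ => (0:ℝ)) x)) (volume) := by
    simpa using (integrable_zero (EuclideanSpace ℝ (Fin n)) ℝ (volume : Measure _))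
  have hfg : Integrable (fun x => (ContinuousLinearMap.mul ℝ ℝ) (G x)
      ((fun _ => (1:ℝ)) x)) (volume) := by
    simpa using hGint
  have key := integral_bilinear_hasLineDerivAt_right_eq_neg_left_of_integrable
    (μ := (volume : Measure (EuclideanSpace ℝ (Fin n)))) (B := ContinuousLinearMap.mul ℝ ℝ)
    (f := G) (f' := fun x => (p + 1) * (F x).re) (g := fun _ => (1:ℝ)) (g' := fun _ => (0:ℝ))
    hf'g hfg' hfg (fun x _ => hGd x) (fun x _ => hg x)
  simp only [ContinuousLinearMap.mul_apply', mul_zero, mul_one, integral_zero] at key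
  have h1 : ∫ x, (p + 1) * (F x).re = 0 := by linarith [key]
  rw [integral_const_mul] at h1
  have hp1 : p + 1 ≠ 0 := by linarith
  exact (mul_eq_zero.mp h1).resolve_left hp1
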